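/- arXiv:1412.0598 — 3 statements merged into one kernel-verified Lean document; each statement's English description precedes it below -/
import Mathlib

section
/- For every integer n≥0 and every δ>0, the function ζ ↦ ∫₀^δ r^{2n}/(r²−ζ) dr, defined for ζ<0, can be written as I_n(ζ) = (π/2)·ζⁿ/√(−ζ) + Ĩ_n(ζ), where Ĩ_n is the restriction to (−ε,0) of a function analytic in a neighborhood of the origin. -/
open MeasureTheory Real Filter Topology

noncomputable section

/-- Continuity of the integrand for `ζ < 0`. -/
lemma aux_cont (n : ℕ) {ζ : ℝ} (hζ : ζ < 0) :
    Continuous fun r : ℝ => r ^ (2 * n) / (r ^ 2 - ζ) := by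
  apply Continuous.div (by fun_prop) (by fun_prop)
  intro x
  nlinarith [sq_nonneg x]

/-- For every `n ≥ 0` and `δ > 0`, the function
`ζ ↦ ∫₀^δ r^(2n)/(r² − ζ) dr` (defined for `ζ < 0`) can be written as
`I_n(ζ) = (π/2)·ζⁿ/√(−ζ) + Ĩ_n(ζ)`, where `Ĩ_n` is the restriction to `(−ε, 0)` of a
function analytic in a neighborhood of the origin. -/
theorem statement1 (n : ℕ) (δ : ℝ) (hδ : 0 < δ) :
    (∀ ζ : ℝ, ζ < 0 →
      IntegrableOn (fun r : ℝ => r ^ (2 * n) / (r ^ 2 - ζ)) (Set.Ioo 0 δ) volume) ∧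
    ∃ ε > (0 : ℝ), ∃ g : ℝ → ℝ,
      AnalyticOnNhd ℝ g (Metric.ball (0 : ℝ) ε) ∧
      ∀ ζ : ℝ, -ε < ζ → ζ < 0 →
        ∫ r in Set.Ioo (0 : ℝ) δ, r ^ (2 * n) / (r ^ 2 - ζ) =
          Real.pi / 2 * ζ ^ n / Real.sqrt (-ζ) + g ζ := by
  constructor
  · intro ζ hζ
    exact ((aux_cont n hζ).integrableOn_Icc).mono_set Set.Ioo_subset_Icc_self
  · -- the coefficients of the analytic correction series
    set c : ℕ → ℝ := fun m => 1 / ((2 * m + 1) * δ ^ (2 * m + 1)) with hc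
    set p : FormalMultilinearSeries ℝ ℝ ℝ := FormalMultilinearSeries.ofScalars ℝ c with hp
    set rr : NNReal := ⟨δ ^ 2, sq_nonneg δ⟩ with hrr
    have hrad : ((rr : NNReal) : ENNReal) ≤ p.radius := by
      apply p.le_radius_of_bound (1 / δ)
      intro m
      have hnorm : ‖p m‖ = |c m| := by
        simp [hp, FormalMultilinearSeries.coeff_ofScalars]
      have hcm : c m = 1 / ((2 * m + 1) * δ ^ (2 * m + 1)) := rfl
      have hpos : (0:ℝ) < (2 * m + 1) * δ ^ (2 * m + 1) := by positivity
      have habs : |c m| = 1 / ((2 * m + 1) * δ ^ (2 * m + 1)) := by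
        rw [hcm, abs_of_pos (by positivity)]
      have hr : (rr : ℝ) = δ ^ 2 := rfl
      rw [hnorm, habs, hr]
      rw [div_mul_eq_mul_div, one_mul, div_le_div_iff₀ hpos hδ]
      have h1 : (δ ^ 2) ^ m * δ = δ ^ (2 * m + 1) := by
        rw [← pow_mul, pow_succ]
      have h2 : (1:ℝ) ≤ 2 * m + 1 := by
        have := Nat.cast_nonneg (α := ℝ) m
        linarith
      calc (δ ^ 2) ^ m * δ = δ ^ (2 * m + 1) := h1
        _ ≤ (2 * m + 1) * δ ^ (2 * m + 1) := le_mul_of_one_le_left (by positivity) h2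
        _ = 1 * ((2 * m + 1) * δ ^ (2 * m + 1)) := (one_mul _).symm

    have hrrpos : (0 : ENNReal) < (rr : ENNReal) := by
      have : (0:NNReal) < rr := by
        rw [← NNReal.coe_lt_coe]
        exact (by positivity : (0:ℝ) < δ ^ 2)
      exact_mod_cast this
    have hradpos : 0 < p.radius := lt_of_lt_of_le hrrpos hrad
    have hball := p.hasFPowerSeriesOnBall hradpos
    have hsub : Metric.ball (0:ℝ) (δ ^ 2) ⊆ EMetric.ball (0:ℝ) p.radius := by
      rw [show Metric.ball (0:ℝ) (δ ^ 2) = Metric.ball (0:ℝ) (rr:ℝ) from rfl,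
        ← Metric.emetric_ball_nnreal]
      exact EMetric.ball_subset_ball hrad
    refine ⟨δ ^ 2, by positivity, fun z =>
      (∑ k ∈ Finset.range n, z ^ (n - 1 - k) * δ ^ (2 * k + 1) / (2 * k + 1))
        - z ^ n * p.sum z, ?_, ?_⟩
    · -- analyticity
      apply AnalyticOnNhd.sub
      · apply Finset.analyticOnNhd_fun_sum
        intro k _
        exact ((analyticOnNhd_id.pow _).mul analyticOnNhd_const).div analyticOnNhd_const
          (fun x _ => by positivity)
      · exact (analyticOnNhd_id.pow _).mul ((hball.analyticOnNhd).mono hsub)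
    · -- the evaluation
      intro ζ hε hζ
      set a : ℝ := Real.sqrt (-ζ) with ha
      have ha0 : 0 < a := Real.sqrt_pos.mpr (by linarith)
      have ha2 : a ^ 2 = -ζ := Real.sq_sqrt (by linarith)
      have hζa : ζ = -a ^ 2 := by linarith
      -- rewrite as interval integral
      have hint : ∫ r in Set.Ioo (0:ℝ) δ, r ^ (2 * n) / (r ^ 2 - ζ)
          = ∫ r in (0:ℝ)..δ, r ^ (2 * n) / (r ^ 2 - ζ) := by
        rw [intervalIntegral.integral_of_le hδ.le, integral_Ioc_eq_integral_Ioo]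
      -- antiderivative
      set F : ℝ → ℝ := fun r =>
        (∑ k ∈ Finset.range n, ζ ^ (n - 1 - k) * r ^ (2 * k + 1) / (2 * k + 1))
          + ζ ^ n * (Real.arctan (r / a) / a) with hF
      have hderiv : ∀ r ∈ Set.uIcc (0:ℝ) δ, HasDerivAt F (r ^ (2 * n) / (r ^ 2 - ζ)) r := by
        intro r _
        have hden : 0 < r ^ 2 - ζ := by nlinarith [sq_nonneg r]
        have hsum : HasDerivAt
            (fun r : ℝ => ∑ k ∈ Finset.range n, ζ ^ (n - 1 - k) * r ^ (2 * k + 1) / (2 * k + 1))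
            (∑ k ∈ Finset.range n, ζ ^ (n - 1 - k) * r ^ (2 * k)) r := by
          apply HasDerivAt.fun_sum
          intro k _
          have h1 : HasDerivAt (fun r : ℝ => ζ ^ (n - 1 - k) * r ^ (2 * k + 1) / (2 * k + 1))
              (ζ ^ (n - 1 - k) * ((2 * k + 1) * r ^ (2 * k)) / (2 * k + 1)) r := by
            have := ((hasDerivAt_pow (2 * k + 1) r).const_mul
              (ζ ^ (n - 1 - k))).div_const ((2 * k + 1 : ℕ) : ℝ)
            simpa using this
          have h2 : ζ ^ (n - 1 - k) * ((2 * k + 1) * r ^ (2 * k)) / (2 * k + 1)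
              = ζ ^ (n - 1 - k) * r ^ (2 * k) := by
            field_simp
          rwa [h2] at h1
        have harct : HasDerivAt (fun r : ℝ => ζ ^ n * (Real.arctan (r / a) / a))
            (ζ ^ n * ((1 / (1 + (r / a) ^ 2) * (1 / a)) / a)) r := by
          have hbase : HasDerivAt (fun r : ℝ => Real.arctan (r / a))
              (1 / (1 + (r / a) ^ 2) * (1 / a)) r := by
            have hdiv : HasDerivAt (fun x : ℝ => x / a) (1 / a) r := by
              simpa using (hasDerivAt_id r).div_const a
            exact (Real.hasDerivAt_arctan (r / a)).comp r hdiv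
          exact (hbase.div_const a).const_mul (ζ ^ n)
        have := hsum.add harct
        have hkey : (∑ k ∈ Finset.range n, ζ ^ (n - 1 - k) * r ^ (2 * k))
            + ζ ^ n * ((1 / (1 + (r / a) ^ 2) * (1 / a)) / a)
            = r ^ (2 * n) / (r ^ 2 - ζ) := by
          have e0 : 1 + (r / a) ^ 2 = (r ^ 2 - ζ) / a ^ 2 := by
            rw [div_pow, ha2]
            field_simp [hζ.ne]
            ring
          have e1 : ζ ^ n * ((1 / (1 + (r / a) ^ 2) * (1 / a)) / a) = ζ ^ n / (r ^ 2 - ζ) := by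
            rw [e0]
            field_simp
          have e2 : (∑ k ∈ Finset.range n, ζ ^ (n - 1 - k) * r ^ (2 * k))
              = (r ^ (2 * n) - ζ ^ n) / (r ^ 2 - ζ) := by
            rw [eq_div_iff hden.ne']
            have : (∑ k ∈ Finset.range n, ζ ^ (n - 1 - k) * r ^ (2 * k))
                = ∑ k ∈ Finset.range n, (r ^ 2) ^ k * ζ ^ (n - 1 - k) := by
              refine Finset.sum_congr rfl fun k _ => ?_
              rw [pow_mul, mul_comm]
            rw [this, geom_sum₂_mul, ← pow_mul]
          rw [e1, e2]
          field_simp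
          ring
        rwa [hkey] at this
      have hii : IntervalIntegrable (fun r : ℝ => r ^ (2 * n) / (r ^ 2 - ζ)) volume 0 δ :=
        (aux_cont n hζ).intervalIntegrable 0 δ
      have hFTC := intervalIntegral.integral_eq_sub_of_hasDerivAt hderiv hii
      have hF0 : F 0 = 0 := by
        simp [hF]
      have hFδ : F δ = (∑ k ∈ Finset.range n, ζ ^ (n - 1 - k) * δ ^ (2 * k + 1) / (2 * k + 1))
          + ζ ^ n * (Real.arctan (δ / a) / a) := rfl
      -- arctan complement
      have harc : Real.arctan (δ / a) = Real.pi / 2 - Real.arctan (a / δ) := by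
        rw [show δ / a = (a / δ)⁻¹ by rw [inv_div]]
        exact Real.arctan_inv_of_pos (div_pos ha0 hδ)
      -- identify the power series sum
      have hxlt : ‖a / δ‖ < 1 := by
        rw [Real.norm_eq_abs, abs_of_pos (div_pos ha0 hδ), div_lt_one hδ]
        rw [ha]
        exact (Real.sqrt_lt' hδ).mpr (by nlinarith)
      have hhs : HasSum (fun m : ℕ => c m * ζ ^ m) (Real.arctan (a / δ) / a) := by
        have h0 := (Real.hasSum_arctan hxlt).div_const a
        have hfun : (fun m : ℕ => ((-1) ^ m * (a / δ) ^ (2 * m + 1) / (2 * m + 1 : ℕ)) / a)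
            = fun m : ℕ => c m * ζ ^ m := by
          funext m
          have hcm : c m = 1 / ((2 * m + 1) * δ ^ (2 * m + 1)) := rfl
          rw [hcm, hζa]
          rw [div_pow, neg_pow (a ^ 2) m, ← pow_mul]
          push_cast
          field_simp
          ring
        rwa [hfun] at h0
      have hpsum : p.sum ζ = Real.arctan (a / δ) / a := by
        have : p.sum ζ = ∑' m : ℕ, c m * ζ ^ m := by
          refine tsum_congr fun m => ?_
          simpa [smul_eq_mul, hp, FormalMultilinearSeries.coeff_ofScalars] using FormalMultilinearSeries.ofScalars_apply_eq (E := ℝ) c ζ m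
        rw [this, hhs.tsum_eq]
      -- put everything together
      rw [hint, hFTC, hF0, hFδ, harc]
      simp only [hpsum]
      ring
end
end

section
/- For every p∈U_δ(p₀) and μ>0, the limit lim_{z→M(p)⁺} Ω(p;z) = Ω(p) holds, and consequently lim_{z→M(p)⁺} Δ(μ,p;z) = 1 − μ/μ(p). -/
set_option maxHeartbeats 1000000


open MeasureTheory Real Filter Topology

noncomputable section

/-- The 3-torus `T³ = (ℝ/2πℤ)³` is modeled as `ℝ³ = Fin 3 → ℝ`; all functions involved
are required to be `2π`-periodic in each variable. -/
abbrev 𝕋 : Type := Fin 3 → ℝ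

/-- The shift by `2π` times an integer vector (a period of the torus). -/
def shift (v : Fin 3 → ℤ) : 𝕋 := fun i => 2 * Real.pi * (v i)

/-- A fundamental domain `(-π, π]³` of the torus, used as the integration domain. -/
def box : Set 𝕋 := Set.univ.pi fun _ => Set.Ioc (-Real.pi) Real.pi

lemma quad_bound (h : 𝕋 → ℝ) (hh : ContDiff ℝ 2 h) (x : 𝕋)
    (hgrad : fderiv ℝ h x = 0)
    (hhess : ∀ v : 𝕋, v ≠ 0 → iteratedFDeriv ℝ 2 h x ![v, v] < 0) :
    ∃ r > (0:ℝ), ∃ c₁ > (0:ℝ), ∀ y : 𝕋, ‖y‖ ≤ r → c₁ * ‖y‖ ^ 2 ≤ h x - h (x + y) := by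
  set H := fderiv ℝ (fderiv ℝ h) x with hH
  have hQcont : Continuous fun y : 𝕋 => -(H y y) :=
    (H.continuous₂.comp (continuous_id.prodMk continuous_id)).neg
  obtain ⟨u₀, hu₀, hmin⟩ := (isCompact_sphere (0:𝕋) 1).exists_isMinOn
    (NormedSpace.sphere_nonempty.2 zero_le_one) hQcont.continuousOn
  set lam := -(H u₀ u₀) with hlamdef
  have hu₀n : ‖u₀‖ = 1 := by simpa using mem_sphere_zero_iff_norm.mp hu₀
  have hu₀0 : u₀ ≠ 0 := by intro h0; rw [h0] at hu₀n; simp at hu₀n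
  have hlam : 0 < lam := by
    have h2 := hhess u₀ hu₀0
    rw [iteratedFDeriv_two_apply] at h2
    simp only [Matrix.cons_val_zero, Matrix.cons_val_one, Matrix.head_cons] at h2
    rw [hlamdef, hH]
    linarith
  have hQ : ∀ y : 𝕋, lam * ‖y‖ ^ 2 ≤ -(H y y) := by
    intro y
    rcases eq_or_ne y 0 with rfl | hy
    · simp
    · have hny : (0:ℝ) < ‖y‖ := norm_pos_iff.mpr hy
      have hu : (‖y‖⁻¹ • y) ∈ Metric.sphere (0:𝕋) 1 := by
        simp [norm_smul, abs_of_pos (inv_pos.mpr hny), inv_mul_cancel₀ hny.ne']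
      have h2 : lam ≤ -(H (‖y‖⁻¹ • y) (‖y‖⁻¹ • y)) := hmin hu
      have h3 : H (‖y‖⁻¹ • y) (‖y‖⁻¹ • y) = ‖y‖⁻¹ * (‖y‖⁻¹ * H y y) := by
        simp [_root_.map_smul, smul_eq_mul]
      rw [h3] at h2
      have h4 : lam * ‖y‖ ^ 2 ≤ (‖y‖⁻¹ * (‖y‖⁻¹ * (-(H y y)))) * ‖y‖ ^ 2 := by
        have := mul_le_mul_of_nonneg_right h2 (le_of_lt (by positivity : (0:ℝ) < ‖y‖ ^ 2))
        calc lam * ‖y‖ ^ 2 ≤ (-(‖y‖⁻¹ * (‖y‖⁻¹ * H y y))) * ‖y‖ ^ 2 := this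
        _ = (‖y‖⁻¹ * (‖y‖⁻¹ * (-(H y y)))) * ‖y‖ ^ 2 := by ring
      calc lam * ‖y‖ ^ 2 ≤ (‖y‖⁻¹ * (‖y‖⁻¹ * (-(H y y)))) * ‖y‖ ^ 2 := h4
      _ = (-(H y y)) * (‖y‖⁻¹ * ‖y‖)^2 := by ring
      _ = -(H y y) := by rw [inv_mul_cancel₀ hny.ne']; ring
  have hd1 : Differentiable ℝ h := hh.differentiable two_ne_zero
  have hdf : Differentiable ℝ (fderiv ℝ h) :=
    (hh.fderiv_right (m := 1) (le_refl _)).differentiable one_ne_zero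
  have hder : HasFDerivAt (fderiv ℝ h) H x := (hdf x).hasFDerivAt
  have hlo := hasFDerivAt_iff_isLittleO_nhds_zero.mp hder
  rw [hgrad] at hlo
  have heps := hlo.def (show (0:ℝ) < lam/4 by linarith)
  rw [Metric.eventually_nhds_iff] at heps
  obtain ⟨r', hr', hsmall⟩ := heps
  refine ⟨r'/2, by linarith, lam/4, by linarith, ?_⟩
  intro y hy
  have key : |h (x + y) - (1:ℝ)^2/2 * (H y y) - h x| ≤ lam/4 * ‖y‖^2 := by
    have hψd : ∀ t ∈ Set.Icc (0:ℝ) 1, HasDerivWithinAt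
        (fun t : ℝ => h (x + t • y) - t^2/2 * (H y y))
        ((fderiv ℝ h (x + t • y)) y - t * (H y y)) (Set.Icc 0 1) t := by
      intro t _
      have h1 : HasDerivAt (fun t : ℝ => x + t • y) y t := by
        simpa using ((hasDerivAt_id t).smul_const y).const_add x
      have h2 : HasDerivAt (fun t : ℝ => h (x + t • y)) ((fderiv ℝ h (x + t • y)) y) t :=
        (hd1 _).hasFDerivAt.comp_hasDerivAt t h1
      have h3 : HasDerivAt (fun t : ℝ => t^2/2 * (H y y)) (t * (H y y)) t := by
        have := ((hasDerivAt_pow 2 t).div_const 2).mul_const (H y y)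
        exact this.congr_deriv (by norm_num)
        try ring
      exact (h2.sub h3).hasDerivWithinAt
    have hbound : ∀ t ∈ Set.Ico (0:ℝ) 1,
        ‖(fderiv ℝ h (x + t • y)) y - t * (H y y)‖ ≤ lam/4 * ‖y‖^2 := by
      intro t ht
      have htn : ‖t • y‖ ≤ ‖y‖ := by
        rw [norm_smul, Real.norm_eq_abs, abs_of_nonneg ht.1]
        nlinarith [norm_nonneg y, ht.2.le, ht.1]
      have hdist : dist (t • y) 0 < r' := by
        rw [dist_zero_right]
        calc ‖t • y‖ ≤ ‖y‖ := htn
        _ ≤ r'/2 := hy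
        _ < r' := by linarith
      have hs := hsmall hdist
      rw [sub_zero] at hs
      have heq : (fderiv ℝ h (x + t • y)) y - t * (H y y)
          = (fderiv ℝ h (x + t • y) - H (t • y)) y := by
        simp only [ContinuousLinearMap.sub_apply, _root_.map_smul, smul_eq_mul,
          ContinuousLinearMap.smul_apply]
        try ring
      rw [heq]
      calc ‖(fderiv ℝ h (x + t • y) - H (t • y)) y‖
          ≤ ‖fderiv ℝ h (x + t • y) - H (t • y)‖ * ‖y‖ :=
            ContinuousLinearMap.le_opNorm _ y
      _ ≤ (lam/4 * ‖t • y‖) * ‖y‖ := mul_le_mul_of_nonneg_right hs (norm_nonneg y)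
      _ ≤ lam/4 * ‖y‖^2 := by
            have h6 := mul_le_mul_of_nonneg_right htn (norm_nonneg y)
            nlinarith [hlam]
    have := norm_image_sub_le_of_norm_deriv_le_segment' hψd hbound 1
      (Set.right_mem_Icc.2 zero_le_one)
    simpa [Real.norm_eq_abs] using this
  have h5 : -(H y y) ≥ lam * ‖y‖^2 := hQ y
  rw [abs_le] at key
  nlinarith [key.1, key.2]

lemma oneD (b R : ℝ) (hR : 0 ≤ R) :
    IntegrableOn (fun u : ℝ => |u - b| ^ (-(2/3) : ℝ)) (Set.Icc (b - R) (b + R)) := by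
  have base : IntervalIntegrable (fun u : ℝ => u ^ (-(2/3) : ℝ)) volume 0 R :=
    intervalIntegral.intervalIntegrable_rpow' (by norm_num)
  have right : IntervalIntegrable (fun u : ℝ => (u - b) ^ (-(2/3) : ℝ)) volume b (b + R) := by
    have := base.comp_sub_right b
    simpa [add_comm] using this
  have left : IntervalIntegrable (fun u : ℝ => (b - u) ^ (-(2/3) : ℝ)) volume (b - R) b := by
    have := (base.comp_sub_left b).symm
    simpa using this
  have right' : IntervalIntegrable (fun u : ℝ => |u - b| ^ (-(2/3) : ℝ)) volume b (b + R) := by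
    rw [intervalIntegrable_iff_integrableOn_Ioc_of_le (by linarith)] at right ⊢
    apply right.congr_fun ?_ measurableSet_Ioc
    intro u hu
    show (u - b) ^ (-(2/3) : ℝ) = |u - b| ^ (-(2/3) : ℝ)
    rw [abs_of_nonneg (by linarith [hu.1] : (0:ℝ) ≤ u - b)]
  have left' : IntervalIntegrable (fun u : ℝ => |u - b| ^ (-(2/3) : ℝ)) volume (b - R) b := by
    rw [intervalIntegrable_iff_integrableOn_Ioc_of_le (by linarith)] at left ⊢
    apply left.congr_fun ?_ measurableSet_Ioc
    intro u hu
    show (b - u) ^ (-(2/3) : ℝ) = |u - b| ^ (-(2/3) : ℝ)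
    rw [abs_of_nonpos (by linarith [hu.2] : u - b ≤ 0), neg_sub]
  have : IntervalIntegrable (fun u : ℝ => |u - b| ^ (-(2/3) : ℝ)) volume (b - R) (b + R) :=
    left'.trans right'
  rwa [intervalIntegrable_iff_integrableOn_Icc_of_le (by linarith)] at this

lemma invsq_majorant (a : 𝕋) :
    ∃ P : 𝕋 → ℝ, Integrable P ∧ (∀ s, 0 ≤ P s) ∧
      ∀ s ∈ box, (∀ i, s i ≠ a i) → (‖s - a‖ ^ 2)⁻¹ ≤ P s := by
  have hπ := Real.pi_pos
  set R : ℝ := π + ‖a‖ + 1 with hRdef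
  have hR0 : (0:ℝ) ≤ R := by have := norm_nonneg a; linarith
  set f : Fin 3 → ℝ → ℝ := fun i t =>
    Set.indicator (Set.Icc (a i - R) (a i + R)) (fun u => |u - a i| ^ (-(2/3) : ℝ)) t with hfdef
  refine ⟨fun s => ∏ i, f i (s i), ?_, ?_, ?_⟩
  · apply Integrable.fintype_prod (f := f)
    intro i
    rw [hfdef]
    simp only
    rw [integrable_indicator_iff measurableSet_Icc]
    exact oneD (a i) R hR0
  · intro s
    apply Finset.prod_nonneg; intro i _
    apply Set.indicator_nonneg; intro u _; positivity
  · intro s hs hsa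
    have hsi : ∀ i, |s i| ≤ π := by
      intro i
      have := hs i trivial
      rw [abs_le]; exact ⟨(this.1).le, this.2⟩
    have hfi : ∀ i, f i (s i) = |s i - a i| ^ (-(2/3) : ℝ) := by
      intro i
      rw [hfdef]; simp only
      rw [Set.indicator_of_mem]
      rw [Set.mem_Icc]
      have h1 : |a i| ≤ ‖a‖ := by
        simpa using norm_le_pi_norm a i
      constructor <;> [linarith [(abs_le.mp (hsi i)).1, (abs_le.mp h1).2];
        linarith [(abs_le.mp (hsi i)).2, (abs_le.mp h1).1]]
    have hlt : ∀ i, 0 < |s i - a i| := fun i => abs_pos.mpr (sub_ne_zero.mpr (hsa i))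
    have hne : s - a ≠ 0 := by
      intro h0
      exact hsa 0 (by simpa [sub_eq_zero] using congrFun h0 0)
    have hn : (0:ℝ) < ‖s - a‖ := norm_pos_iff.mpr hne
    have hcoord : ∀ i, |s i - a i| ≤ ‖s - a‖ := by
      intro i
      simpa using norm_le_pi_norm (s - a) i
    have hstep : ∀ i, ‖s - a‖ ^ (-(2/3) : ℝ) ≤ |s i - a i| ^ (-(2/3) : ℝ) := fun i =>
      Real.rpow_le_rpow_of_nonpos (hlt i) (hcoord i) (by norm_num)
    have hprod : (‖s - a‖ ^ 2)⁻¹ = ∏ (_i : Fin 3), (‖s - a‖ ^ (-(2/3) : ℝ)) := by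
      rw [Fin.prod_univ_three, ← Real.rpow_add hn, ← Real.rpow_add hn]
      norm_num
    rw [hprod]
    have hnn : ∀ i : Fin 3, (0:ℝ) ≤ ‖s - a‖ ^ (-(2/3) : ℝ) := fun _ => Real.rpow_nonneg hn.le _
    calc (∏ (_i : Fin 3), (‖s - a‖ ^ (-(2/3) : ℝ)))
        ≤ (∏ i : Fin 3, (|s i - a i| ^ (-(2/3) : ℝ))) := by
          apply Finset.prod_le_prod (fun i _ => hnn i) (fun i _ => hstep i)
    _ = ∏ i, f i (s i) := by
          apply Finset.prod_congr rfl
          intro i _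
          rw [hfi i]

lemma measurableSet_box : MeasurableSet box :=
  MeasurableSet.univ_pi fun _ => measurableSet_Ioc

lemma main_integrable (φ : 𝕋 → ℝ) (hφc : Continuous φ)
    (h : 𝕋 → ℝ) (hh : ContDiff ℝ 2 h) (x : 𝕋)
    (hmax : ∀ q, h q ≤ h x)
    (huniq : ∀ q, h q = h x → ∃ v : Fin 3 → ℤ, q = x + shift v)
    (hper : ∀ (q : 𝕋) (v : Fin 3 → ℤ), h (q + shift v) = h q)
    (hgrad : fderiv ℝ h x = 0)
    (hhess : ∀ v : 𝕋, v ≠ 0 → iteratedFDeriv ℝ 2 h x ![v, v] < 0) :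
    IntegrableOn (fun s => φ s ^ 2 / (h x - h s)) box := by
  have hπ := Real.pi_pos
  obtain ⟨r, hr, c₁, hc₁, hquad⟩ := quad_bound h hh x hgrad hhess
  set N : ℕ := ⌈(π + ‖x‖) / (2 * π)⌉₊ with hNdef
  have hN : π + ‖x‖ ≤ 2 * π * N := by
    have h1 : (π + ‖x‖) / (2 * π) ≤ (N : ℝ) := Nat.le_ceil _
    rw [div_le_iff₀ (by linarith)] at h1
    linarith
  set V : Finset (Fin 3 → ℤ) := Fintype.piFinset (fun _ => Finset.Icc (-(N:ℤ)) N) with hVdef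
  set ClBox : Set 𝕋 := Set.univ.pi fun _ : Fin 3 => Set.Icc (-π) π with hClDef
  have hsub : box ⊆ ClBox := fun s hs i hi => ⟨(hs i hi).1.le, (hs i hi).2⟩
  have hclcomp : IsCompact ClBox := isCompact_univ_pi fun _ => isCompact_Icc
  have hclne : ClBox.Nonempty := ⟨0, fun i _ => by constructor <;> simp <;> linarith⟩
  -- bound for φ²
  obtain ⟨s₁, _, hs₁max⟩ := hclcomp.exists_isMaxOn hclne (hφc.pow 2).continuousOn
  set A : ℝ := φ s₁ ^ 2 with hAdef
  have hA0 : 0 ≤ A := sq_nonneg _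
  have hAb : ∀ s ∈ ClBox, φ s ^ 2 ≤ A := fun s hs => hs₁max hs
  -- uniform gap outside the balls
  have hKpos : ∃ ε > (0:ℝ), ∀ s ∈ ClBox, (∀ v ∈ V, r ≤ ‖s - (x + shift v)‖) →
      ε ≤ h x - h s := by
    set K : Set 𝕋 := ClBox ∩ ⋂ v ∈ V, {s : 𝕋 | r ≤ ‖s - (x + shift v)‖} with hKdef
    have hKc : IsCompact K := by
      apply hclcomp.inter_right
      apply isClosed_biInter
      intro v _
      exact isClosed_le continuous_const ((continuous_id.sub continuous_const).norm)
    rcases K.eq_empty_or_nonempty with hKe | hKn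
    · refine ⟨1, one_pos, fun s hs hsd => ?_⟩
      exfalso
      have hmem : s ∈ K := ⟨hs, Set.mem_biInter hsd⟩
      rw [hKe] at hmem
      exact hmem
    · obtain ⟨s₀, hs₀K, hs₀min⟩ := hKc.exists_isMinOn hKn
        (continuous_const.sub hh.continuous).continuousOn
      refine ⟨h x - h s₀, ?_, fun s hs hsd => hs₀min ⟨hs, Set.mem_biInter hsd⟩⟩
      rcases lt_or_eq_of_le (hmax s₀) with hlt | heq
      · linarith
      · exfalso
        obtain ⟨u, hu⟩ := huniq s₀ heq
        have huV : u ∈ V := by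
          rw [hVdef, Fintype.mem_piFinset]
          intro i
          rw [Finset.mem_Icc]
          have h1 : |s₀ i| ≤ π := by
            have := hs₀K.1 i trivial
            rw [abs_le]; exact ⟨this.1, this.2⟩
          have h2 : |x i| ≤ ‖x‖ := by simpa using norm_le_pi_norm x i
          have h3 : s₀ i = x i + 2 * π * u i := by rw [hu]; rfl
          have h4 : |(u i : ℝ)| ≤ (N : ℝ) := by
            have h5 : 2 * π * |(u i : ℝ)| = |s₀ i - x i| := by
              rw [h3]; rw [show x i + 2 * π * u i - x i = 2 * π * (u i : ℝ) by ring,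
                abs_mul, abs_of_pos (by linarith : (0:ℝ) < 2 * π)]
            have h6 : |s₀ i - x i| ≤ π + ‖x‖ := by
              calc |s₀ i - x i| ≤ |s₀ i| + |x i| := abs_sub _ _
              _ ≤ π + ‖x‖ := by linarith [abs_nonneg (x i)]
            nlinarith
          constructor
          · exact_mod_cast neg_le_of_abs_le h4
          · exact_mod_cast le_of_abs_le h4
        have := Set.mem_iInter₂.mp hs₀K.2 u huV
        rw [hu] at this
        simp at this
        linarith
  obtain ⟨ε, hε, hgap⟩ := hKpos
  -- the majorants
  have hPex : ∀ v : Fin 3 → ℤ, ∃ P : 𝕋 → ℝ, Integrable P ∧ (∀ s, 0 ≤ P s) ∧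
      ∀ s ∈ box, (∀ i, s i ≠ (x + shift v) i) → (‖s - (x + shift v)‖ ^ 2)⁻¹ ≤ P s :=
    fun v => invsq_majorant (x + shift v)
  choose P hPint hPnn hPbd using hPex
  set G : 𝕋 → ℝ := fun s => (∑ v ∈ V, (A / c₁) * P v s) + A / ε with hGdef
  have hGint : IntegrableOn G box := by
    apply Integrable.add
    · exact (integrable_finset_sum V fun v _ => (hPint v).const_mul _).integrableOn
    · apply (integrableOn_const_iff enorm_ne_top).mpr
      right
      exact lt_of_le_of_lt (measure_mono hsub) hclcomp.measure_lt_top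
  -- measurability
  have hFmeas : AEStronglyMeasurable (fun s => φ s ^ 2 / (h x - h s))
      (volume.restrict box) :=
    (((hφc.pow 2).measurable).div (measurable_const.sub hh.continuous.measurable)).aestronglyMeasurable
  -- the bad null set
  have hbad1 : volume {s : 𝕋 | h s = h x} = 0 := by
    apply Set.Countable.measure_zero
    apply Set.Countable.mono _ (Set.countable_range fun v : Fin 3 → ℤ => x + shift v)
    intro s hs
    obtain ⟨v, hv⟩ := huniq s hs
    exact ⟨v, hv.symm⟩
  have hbad2 : volume (⋃ v ∈ V, ⋃ i : Fin 3, {s : 𝕋 | s i = (x + shift v) i}) = 0 := by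
    apply (measure_biUnion_null_iff V.countable_toSet).mpr
    intro v _
    apply (measure_iUnion_null_iff).mpr
    intro i
    rw [MeasureTheory.volume_pi]
    exact Measure.pi_hyperplane (fun _ => volume) i _
  -- conclude by domination
  apply Integrable.mono' hGint hFmeas
  have hae : ∀ᵐ s ∂volume, s ∉ ({s : 𝕋 | h s = h x} ∪
      ⋃ v ∈ V, ⋃ i : Fin 3, {s : 𝕋 | s i = (x + shift v) i}) :=
    measure_eq_zero_iff_ae_notMem.mp (measure_union_null hbad1 hbad2)
  filter_upwards [ae_restrict_mem measurableSet_box, ae_restrict_of_ae hae] with s hsbox hsgood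
  have hsne : h s ≠ h x := fun hc => hsgood (Or.inl hc)
  have hcoordne : ∀ v ∈ V, ∀ i : Fin 3, s i ≠ (x + shift v) i := by
    intro v hv i hc
    exact hsgood (Or.inr (Set.mem_biUnion hv (Set.mem_iUnion.mpr ⟨i, hc⟩)))
  have hgs : 0 < h x - h s := lt_of_le_of_ne (sub_nonneg.mpr (hmax s)) 
    (fun hc => hsne (by linarith [hc.symm] ))
  have hFnn : 0 ≤ φ s ^ 2 / (h x - h s) := div_nonneg (sq_nonneg _) hgs.le
  rw [Real.norm_eq_abs, abs_of_nonneg hFnn]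
  have hsum_nn : 0 ≤ ∑ v ∈ V, (A / c₁) * P v s :=
    Finset.sum_nonneg fun v _ => mul_nonneg (div_nonneg hA0 hc₁.le) (hPnn v s)
  have hφA : φ s ^ 2 ≤ A := hAb s (hsub hsbox)
  by_cases hcase : ∃ v ∈ V, ‖s - (x + shift v)‖ < r
  · obtain ⟨v, hvV, hvr⟩ := hcase
    set y : 𝕋 := s - (x + shift v) with hydef
    have hy0 : y ≠ 0 := by
      intro hc
      exact hcoordne v hvV 0 (by
        have := congrFun hc 0
        simpa [hydef, sub_eq_zero] using this)
    have hyn : 0 < ‖y‖ := norm_pos_iff.mpr hy0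
    have hhs : h s = h (x + y) := by
      have : s = (x + y) + shift v := by rw [hydef]; abel
      rw [this, hper]
    have hq : c₁ * ‖y‖ ^ 2 ≤ h x - h s := by
      rw [hhs]
      exact hquad y hvr.le
    have hpos : 0 < c₁ * ‖y‖ ^ 2 := by positivity
    calc φ s ^ 2 / (h x - h s) ≤ φ s ^ 2 / (c₁ * ‖y‖ ^ 2) :=
          div_le_div_of_nonneg_left (sq_nonneg _) hpos hq
    _ ≤ A / (c₁ * ‖y‖ ^ 2) := div_le_div₀ hA0 hφA hpos le_rfl
    _ = (A / c₁) * (‖y‖ ^ 2)⁻¹ := by field_simp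
    _ ≤ (A / c₁) * P v s := by
          apply mul_le_mul_of_nonneg_left _ (div_nonneg hA0 hc₁.le)
          exact hPbd v s hsbox (hcoordne v hvV)
    _ ≤ G s := by
          rw [hGdef]
          have h1 : (A / c₁) * P v s ≤ ∑ v' ∈ V, (A / c₁) * P v' s :=
            Finset.single_le_sum (fun v' _ => mul_nonneg (div_nonneg hA0 hc₁.le) (hPnn v' s)) hvV
          have h2 : 0 ≤ A / ε := div_nonneg hA0 hε.le
          simp only
          linarith
  · push_neg at hcase
    have hges : ε ≤ h x - h s := hgap s (hsub hsbox) hcase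
    calc φ s ^ 2 / (h x - h s) ≤ A / ε := div_le_div₀ hA0 hφA hε hges
    _ ≤ G s := by rw [hGdef]; simp only; linarith

/-- For every `p ∈ U_δ(p₀)` and `μ > 0`, one has
`lim_{z→M(p)⁺} Ω(p;z) = Ω(p)` and consequently
`lim_{z→M(p)⁺} Δ(μ,p;z) = 1 − μ/μ(p)`. -/
theorem statement11
    (φ : 𝕋 → ℝ)
    (hφa : AnalyticOnNhd ℝ φ Set.univ)
    (hφper : ∀ (x : 𝕋) (v : Fin 3 → ℤ), φ (x + shift v) = φ x)
    (hφnt : φ ≠ 0)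
    (w : 𝕋 → 𝕋 → ℝ)
    (hwa : AnalyticOnNhd ℝ (fun x : 𝕋 × 𝕋 => w x.1 x.2) Set.univ)
    (hwper : ∀ (p q : 𝕋) (v u : Fin 3 → ℤ), w (p + shift v) (q + shift u) = w p q)
    (p₀ q₀ : 𝕋)
    (hmax : ∀ p q : 𝕋, w p q ≤ w p₀ q₀)
    (huniq : ∀ p q : 𝕋, w p q = w p₀ q₀ →
      ∃ v u : Fin 3 → ℤ, p = p₀ + shift v ∧ q = q₀ + shift u)
    (hgrad : fderiv ℝ (fun x : 𝕋 × 𝕋 => w x.1 x.2) (p₀, q₀) = 0)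
    (hhess : ∀ v : 𝕋 × 𝕋, v ≠ 0 →
      iteratedFDeriv ℝ 2 (fun x : 𝕋 × 𝕋 => w x.1 x.2) (p₀, q₀) ![v, v] < 0)
    (δ : ℝ) (hδ : 0 < δ) (q0 : 𝕋 → 𝕋)
    (hq0a : AnalyticOnNhd ℝ q0 (Metric.ball p₀ δ))
    (hq0max : ∀ p ∈ Metric.ball p₀ δ, ∀ q : 𝕋, w p q ≤ w p (q0 p))
    (hq0uniq : ∀ p ∈ Metric.ball p₀ δ, ∀ q : 𝕋, w p q = w p (q0 p) →
      ∃ v : Fin 3 → ℤ, q = q0 p + shift v)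
    (hq0grad : ∀ p ∈ Metric.ball p₀ δ, fderiv ℝ (w p) (q0 p) = 0)
    (hq0hess : ∀ p ∈ Metric.ball p₀ δ, ∀ v : 𝕋, v ≠ 0 →
      iteratedFDeriv ℝ 2 (w p) (q0 p) ![v, v] < 0)
    (p : 𝕋) (hp : p ∈ Metric.ball p₀ δ) (μ : ℝ) (hμ : 0 < μ) :
    Tendsto (fun z : ℝ => ∫ s in box, φ s ^ 2 / (z - w p s)) (𝓝[>] (w p (q0 p)))
      (𝓝 (∫ s in box, φ s ^ 2 / (w p (q0 p) - w p s))) ∧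
    Tendsto (fun z : ℝ => 1 - μ * ∫ s in box, φ s ^ 2 / (z - w p s)) (𝓝[>] (w p (q0 p)))
      (𝓝 (1 - μ / (∫ s in box, φ s ^ 2 / (w p (q0 p) - w p s))⁻¹)) := by
  have hshift0 : shift 0 = 0 := by funext i; simp [shift]
  have hper : ∀ (q : 𝕋) (v : Fin 3 → ℤ), w p (q + shift v) = w p q := by
    intro q v
    have := hwper p q 0 v
    rwa [hshift0, add_zero] at this
  have hφcont : Continuous φ := by
    rw [continuous_iff_continuousAt]
    exact fun s => (hφa s trivial).continuousAt
  have hwpa : AnalyticOnNhd ℝ (w p) Set.univ := by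
    intro q _
    have h1 : AnalyticAt ℝ (fun q : 𝕋 => ((p, q) : 𝕋 × 𝕋)) q :=
      analyticAt_const.prod analyticAt_id
    exact (hwa (p, q) trivial).comp h1
  have hwcd : ContDiff ℝ 2 (w p) := hwpa.contDiff
  have hint : IntegrableOn (fun s => φ s ^ 2 / (w p (q0 p) - w p s)) box :=
    main_integrable φ hφcont (w p) hwcd (q0 p) (hq0max p hp) (hq0uniq p hp) hper
      (hq0grad p hp) (hq0hess p hp)
  have haegood : ∀ᵐ s : 𝕋 ∂volume, w p s ≠ w p (q0 p) := by
    have hz : volume {s : 𝕋 | w p s = w p (q0 p)} = 0 := by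
      apply Set.Countable.measure_zero
      apply Set.Countable.mono _ (Set.countable_range fun v : Fin 3 → ℤ => q0 p + shift v)
      intro s hs
      obtain ⟨v, hv⟩ := hq0uniq p hp s hs
      exact ⟨v, hv.symm⟩
    exact measure_eq_zero_iff_ae_notMem.mp hz
  have h1 : Tendsto (fun z : ℝ => ∫ s in box, φ s ^ 2 / (z - w p s)) (𝓝[>] (w p (q0 p)))
      (𝓝 (∫ s in box, φ s ^ 2 / (w p (q0 p) - w p s))) := by
    apply tendsto_integral_filter_of_dominated_convergence
      (fun s => φ s ^ 2 / (w p (q0 p) - w p s))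
    · apply Eventually.of_forall
      intro z
      exact (((hφcont.pow 2).measurable).div
        (measurable_const.sub hwcd.continuous.measurable)).aestronglyMeasurable
    · filter_upwards [self_mem_nhdsWithin] with z hz
      filter_upwards [ae_restrict_of_ae haegood] with s hsne
      have hlt : w p s < w p (q0 p) := lt_of_le_of_ne (hq0max p hp s) hsne
      have hzgt : w p (q0 p) < z := hz
      have hnn : 0 ≤ φ s ^ 2 / (z - w p s) := div_nonneg (sq_nonneg _) (by linarith)
      rw [Real.norm_eq_abs, abs_of_nonneg hnn]
      exact div_le_div_of_nonneg_left (sq_nonneg _) (by linarith) (by linarith)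
    · exact hint
    · filter_upwards [ae_restrict_of_ae haegood] with s hsne
      have hne : w p (q0 p) - w p s ≠ 0 := sub_ne_zero.mpr fun hc => hsne hc.symm
      have hc : ContinuousAt (fun z : ℝ => φ s ^ 2 / (z - w p s)) (w p (q0 p)) :=
        continuousAt_const.div (continuousAt_id.sub continuousAt_const) hne
      exact hc.tendsto.mono_left nhdsWithin_le_nhds
  refine ⟨h1, ?_⟩
  rw [div_eq_mul_inv, inv_inv]
  have h2 := h1.const_mul μ
  exact h2.const_sub 1
end
end

section
/- Let p∈U_δ(p₀). If φ(q₀(p))=0, then the function f(q) = φ(q)/(M(p)−w_p(q)) belongs to L²(T³). -/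
open MeasureTheory Real Filter Topology

noncomputable section

-- Auxiliary lemmas

lemma aux_oneD (a R : ℝ) (hR : 0 < R) :
    ∃ h : ℝ → ℝ, Integrable h volume ∧ (∀ t, 0 ≤ h t) ∧
      ∀ t : ℝ, t ≠ a → |t - a| ≤ R → |t - a| ^ (-(2/3) : ℝ) ≤ h t := by
  set r : ℝ := -(2/3) with hr
  have hio : IntegrableOn (fun s : ℝ => s ^ r) (Set.Ioc 0 R) volume := by
    have := intervalIntegral.intervalIntegrable_rpow' (a := 0) (b := R) (r := r) (by norm_num [hr])
    rwa [intervalIntegrable_iff, Set.uIoc_of_le hR.le] at this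
  set g1 : ℝ → ℝ := (Set.Ioc (0:ℝ) R).indicator (fun s => s ^ r) with hg1
  have hg1i : Integrable g1 volume := by
    rw [hg1]
    exact (integrable_indicator_iff measurableSet_Ioc).2 hio
  have hg1n : ∀ t, 0 ≤ g1 t := by
    intro t
    apply Set.indicator_nonneg
    intro s hs
    exact Real.rpow_nonneg hs.1.le _
  refine ⟨fun t => g1 (t - a) + g1 (a - t), ?_, ?_, ?_⟩
  · exact (hg1i.comp_sub_right a).add (hg1i.comp_sub_left a)
  · intro t; exact add_nonneg (hg1n _) (hg1n _)
  · intro t ht hle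
    rcases lt_or_gt_of_ne (sub_ne_zero.mpr ht) with h | h
    · -- t < a
      have h1 : a - t ∈ Set.Ioc (0:ℝ) R := ⟨by linarith, by rw [abs_sub_comm] at hle; rwa [abs_of_pos (by linarith : (0:ℝ) < a - t)] at hle⟩
      have : g1 (a - t) = (a - t) ^ r := Set.indicator_of_mem h1 _
      simp only []
      rw [abs_of_neg h]
      have e : -(t-a) = a - t := by ring
      rw [e, ← this]
      linarith [hg1n (t - a)]
    · have h1 : t - a ∈ Set.Ioc (0:ℝ) R := ⟨h, by rwa [abs_of_pos h] at hle⟩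
      have : g1 (t - a) = (t - a) ^ r := Set.indicator_of_mem h1 _
      simp only []
      rw [abs_of_pos h, ← this]
      linarith [hg1n (a - t)]

lemma aux_coercive (Q : ContinuousMultilinearMap ℝ (fun _ : Fin 2 => 𝕋) ℝ)
    (hQ : ∀ y : 𝕋, y ≠ 0 → Q (fun _ => y) < 0) :
    ∃ lam > (0:ℝ), ∀ y : 𝕋, Q (fun _ => y) ≤ -(lam * ‖y‖^2) := by
  have hsc : IsCompact (Metric.sphere (0:𝕋) 1) := isCompact_sphere 0 1
  have hsn : (Metric.sphere (0:𝕋) 1).Nonempty := NormedSpace.sphere_nonempty.2 zero_le_one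
  have hcont : Continuous fun y : 𝕋 => Q (fun _ => y) :=
    Q.cont.comp (continuous_pi fun _ => continuous_id)
  obtain ⟨u, hu, hmax⟩ := hsc.exists_isMaxOn hsn hcont.continuousOn
  have hun : ‖u‖ = 1 := by simpa using hu
  have hu0 : u ≠ 0 := by intro h; rw [h] at hun; simp at hun
  refine ⟨-(Q fun _ => u), by simpa using hQ u hu0, ?_⟩
  intro y
  rcases eq_or_ne y 0 with rfl | hy
  · have : (fun _ : Fin 2 => (0:𝕋)) = 0 := rfl
    rw [this, Q.map_zero]
    simp
  · set u' : 𝕋 := ‖y‖⁻¹ • y with hu'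
    have hyn : (0:ℝ) < ‖y‖ := norm_pos_iff.2 hy
    have h1 : ‖u'‖ = 1 := by
      rw [hu', norm_smul, norm_inv, norm_norm, inv_mul_cancel₀ hyn.ne']
    have hmem : u' ∈ Metric.sphere (0:𝕋) 1 := by simpa using h1
    have hform : Q (fun _ => y) = ‖y‖^2 * Q (fun _ => u') := by
      have hy' : y = ‖y‖ • u' := by
        rw [hu', smul_smul, mul_inv_cancel₀ hyn.ne', one_smul]
      calc Q (fun _ => y) = Q (fun i => (fun _ : Fin 2 => ‖y‖) i • (fun _ : Fin 2 => u') i) := by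
            congr 1; funext i; exact hy'
        _ = (∏ i : Fin 2, ‖y‖) • Q (fun _ => u') := Q.map_smul_univ _ _
        _ = ‖y‖^2 * Q (fun _ => u') := by simp [sq, smul_eq_mul]
    rw [hform]
    have := hmax hmem
    have h2 : Q (fun _ => u') ≤ Q (fun _ => u) := this
    nlinarith [sq_nonneg ‖y‖, hyn]

lemma aux_taylor (F : 𝕋 → ℝ) (x : 𝕋) (hF : AnalyticAt ℝ F x)
    (hd : fderiv ℝ F x = 0)
    (hh : ∀ v : 𝕋, v ≠ 0 → iteratedFDeriv ℝ 2 F x ![v, v] < 0) :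
    ∃ c > (0:ℝ), ∃ ε > (0:ℝ), ∀ y : 𝕋, ‖y‖ < ε → c * ‖y‖^2 ≤ F x - F (x + y) := by
  obtain ⟨ps, r, hps⟩ := hF
  have hpsAt : HasFPowerSeriesAt F ps x := ⟨r, hps⟩
  -- coefficient identification
  have h0 : ∀ y : 𝕋, ps 0 (fun _ => y) = F x := fun y => hpsAt.coeff_zero _
  have h1 : ∀ y : 𝕋, ps 1 (fun _ => y) = 0 := by
    intro y
    have := hpsAt.fderiv_eq
    rw [hd] at this
    have h2 : (continuousMultilinearCurryFin1 ℝ 𝕋 ℝ) (ps 1) y = (0 : 𝕋 →L[ℝ] ℝ) y := by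
      rw [← this]
    have hv : (fun _ : Fin 1 => y) = ![y] := by funext i; fin_cases i; rfl
    rw [hv]
    simpa [continuousMultilinearCurryFin1] using h2
  have h2 : ∀ y : 𝕋, y ≠ 0 → ps 2 (fun _ => y) < 0 := by
    intro y hy
    have hfs := hps.factorial_smul (y := y) 2
    have hvv : (fun _ : Fin 2 => y) = ![y, y] := by
      funext i; fin_cases i <;> rfl
    have hneg := hh y hy
    rw [← hvv] at hneg
    rw [← hfs] at hneg
    have hneg' : (2:ℝ) * (ps 2 fun _ => y) < 0 := by
      simpa [Nat.factorial, nsmul_eq_mul] using hneg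
    linarith
  obtain ⟨lam, hlam, hco⟩ := aux_coercive (ps 2) h2
  -- Taylor remainder
  have hbig := hpsAt.isBigO_sub_partialSum_pow 3
  rw [Asymptotics.isBigO_iff] at hbig
  obtain ⟨C, hC⟩ := hbig
  rw [Metric.eventually_nhds_iff] at hC
  obtain ⟨ε₀, hε₀, hCb⟩ := hC
  have hC0 : 0 ≤ C ⊔ 1 := le_trans zero_le_one le_sup_right
  set C' := C ⊔ 1 with hC'
  have hC'pos : (0:ℝ) < C' := lt_of_lt_of_le zero_lt_one le_sup_right
  refine ⟨lam / 2, by positivity, min ε₀ (lam / (2 * C')), by positivity, ?_⟩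
  intro y hy
  rcases eq_or_ne y 0 with rfl | hy0
  · simp
  have hy1 : ‖y‖ < ε₀ := lt_of_lt_of_le hy (min_le_left _ _)
  have hy2 : ‖y‖ < lam / (2 * C') := lt_of_lt_of_le hy (min_le_right _ _)
  have hrem : ‖F (x + y) - ps.partialSum 3 y‖ ≤ C' * ‖y‖^3 := by
    have := hCb (by simpa [dist_zero_right] using hy1)
    calc ‖F (x + y) - ps.partialSum 3 y‖ ≤ C * ‖‖y‖ ^ 3‖ := this
      _ ≤ C' * ‖y‖^3 := by
          rw [norm_of_nonneg (by positivity)]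
          exact mul_le_mul_of_nonneg_right le_sup_left (by positivity)
  have hpsum : ps.partialSum 3 y = F x + ps 2 (fun _ => y) := by
    rw [FormalMultilinearSeries.partialSum]
    rw [Finset.sum_range_succ, Finset.sum_range_succ, Finset.sum_range_one]
    rw [h0, h1]
    ring
  have hquad : ps 2 (fun _ => y) ≤ -(lam * ‖y‖^2) := hco y
  have habs : F (x + y) - ps.partialSum 3 y ≤ C' * ‖y‖^3 :=
    le_trans (le_abs_self _) hrem
  have hyn : (0:ℝ) < ‖y‖ := norm_pos_iff.2 hy0
  have hcube : C' * ‖y‖^3 ≤ (lam/2) * ‖y‖^2 := by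
    have : C' * ‖y‖ ≤ lam / 2 := by
      have h2' : ‖y‖ * (2 * C') < lam :=
        (lt_div_iff₀ (by positivity : (0:ℝ) < 2 * C')).mp hy2
      nlinarith
    nlinarith [sq_nonneg ‖y‖, hyn]
  have : F (x + y) ≤ F x - lam * ‖y‖^2 + C' * ‖y‖^3 := by
    have := habs
    rw [hpsum] at this
    linarith
  nlinarith

lemma shift_zero : shift 0 = 0 := by funext i; simp [shift]

/-- Let `p ∈ U_δ(p₀)`.  If `φ(q0 p) = 0`, then
`f(q) = φ(q)/(M(p) − w_p(q))` belongs to `L²(T³)`. -/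
theorem statement18
    (φ : 𝕋 → ℝ)
    (hφa : AnalyticOnNhd ℝ φ Set.univ)
    (hφper : ∀ (x : 𝕋) (v : Fin 3 → ℤ), φ (x + shift v) = φ x)
    (hφnt : φ ≠ 0)
    (w : 𝕋 → 𝕋 → ℝ)
    (hwa : AnalyticOnNhd ℝ (fun x : 𝕋 × 𝕋 => w x.1 x.2) Set.univ)
    (hwper : ∀ (p q : 𝕋) (v u : Fin 3 → ℤ), w (p + shift v) (q + shift u) = w p q)
    (p₀ q₀ : 𝕋)
    (hmax : ∀ p q : 𝕋, w p q ≤ w p₀ q₀)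
    (huniq : ∀ p q : 𝕋, w p q = w p₀ q₀ →
      ∃ v u : Fin 3 → ℤ, p = p₀ + shift v ∧ q = q₀ + shift u)
    (hgrad : fderiv ℝ (fun x : 𝕋 × 𝕋 => w x.1 x.2) (p₀, q₀) = 0)
    (hhess : ∀ v : 𝕋 × 𝕋, v ≠ 0 →
      iteratedFDeriv ℝ 2 (fun x : 𝕋 × 𝕋 => w x.1 x.2) (p₀, q₀) ![v, v] < 0)
    (δ : ℝ) (hδ : 0 < δ) (q0 : 𝕋 → 𝕋)
    (hq0a : AnalyticOnNhd ℝ q0 (Metric.ball p₀ δ))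
    (hq0max : ∀ p ∈ Metric.ball p₀ δ, ∀ q : 𝕋, w p q ≤ w p (q0 p))
    (hq0uniq : ∀ p ∈ Metric.ball p₀ δ, ∀ q : 𝕋, w p q = w p (q0 p) →
      ∃ v : Fin 3 → ℤ, q = q0 p + shift v)
    (hq0grad : ∀ p ∈ Metric.ball p₀ δ, fderiv ℝ (w p) (q0 p) = 0)
    (hq0hess : ∀ p ∈ Metric.ball p₀ δ, ∀ v : 𝕋, v ≠ 0 →
      iteratedFDeriv ℝ 2 (w p) (q0 p) ![v, v] < 0)
    (p : 𝕋) (hp : p ∈ Metric.ball p₀ δ) (hφ0 : φ (q0 p) = 0) :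
    MemLp (fun q => φ q / (w p (q0 p) - w p q)) 2 (volume.restrict box) := by
  classical
  set z0 : 𝕋 := q0 p with hz0
  set M : ℝ := w p z0 with hM
  set f : 𝕋 → ℝ := fun q => φ q / (M - w p q) with hf
  -- analyticity/continuity of the relevant functions
  have hwpa : ∀ q : 𝕋, AnalyticAt ℝ (w p) q := by
    intro q
    have h1 : AnalyticAt ℝ (fun x : 𝕋 × 𝕋 => w x.1 x.2) (p, q) := hwa _ (Set.mem_univ _)
    have h2 : AnalyticAt ℝ (fun q : 𝕋 => ((p, q) : 𝕋 × 𝕋)) q :=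
      analyticAt_const.prod analyticAt_id
    exact h1.comp h2
  have hwc : Continuous (w p) := continuous_iff_continuousAt.2 fun q => (hwpa q).continuousAt
  have hφc : Continuous φ :=
    continuous_iff_continuousAt.2 fun q => (hφa q (Set.mem_univ _)).continuousAt
  -- periodicity in q
  have hper1 : ∀ (x : 𝕋) (v : Fin 3 → ℤ), w p (x + shift v) = w p x := by
    intro x v
    have := hwper p x 0 v
    rwa [shift_zero, add_zero] at this
  -- nonnegativity of the denominator
  have hgnn : ∀ q : 𝕋, 0 ≤ M - w p q := fun q => sub_nonneg.2 (hq0max p hp q)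
  -- Taylor coercivity at z0
  obtain ⟨c, hc, ε, hε, hTay⟩ := aux_taylor (w p) z0 (hwpa z0) (hq0grad p hp) (hq0hess p hp)
  -- Lipschitz bound for φ near z0
  obtain ⟨L, t, ht, hlip⟩ :=
    ((hφa z0 (Set.mem_univ _)).contDiffAt (n := 1)).exists_lipschitzOnWith
  obtain ⟨ε₁, hε₁, hball₁⟩ := Metric.mem_nhds_iff.1 ht
  set r₀ : ℝ := min ε ε₁ with hr₀
  have hr₀pos : 0 < r₀ := lt_min hε hε₁
  set CB : ℝ := (L : ℝ) / c with hCB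
  have hCBnn : 0 ≤ CB := div_nonneg L.coe_nonneg hc.le
  -- key local bound near any maximum point
  have hkey : ∀ z : 𝕋, w p z = M → ∀ q : 𝕋, dist q z < r₀ → q ≠ z →
      |f q| ≤ CB * ‖q - z‖⁻¹ := by
    intro z hz q hdist hqz
    obtain ⟨v, hv⟩ := hq0uniq p hp z hz
    set y : 𝕋 := q - z with hy
    have hyne : y ≠ 0 := sub_ne_zero.2 hqz
    have hynorm : ‖y‖ < r₀ := by rwa [dist_eq_norm] at hdist
    have hq : q = (z0 + y) + shift v := by
      rw [hy, hv, ← hz0]; abel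
    have hwq : w p q = w p (z0 + y) := by rw [hq, hper1]
    have hφq : φ q = φ (z0 + y) := by rw [hq, hφper]
    have hden : c * ‖y‖^2 ≤ M - w p q := by
      rw [hwq]
      exact hTay y (lt_of_lt_of_le hynorm (min_le_left _ _))
    have hypos : (0:ℝ) < ‖y‖ := norm_pos_iff.2 hyne
    have hdenpos : (0:ℝ) < M - w p q := lt_of_lt_of_le (by positivity) hden
    have hmem : z0 + y ∈ t := by
      apply hball₁
      simp only [Metric.mem_ball, dist_eq_norm]
      have : z0 + y - z0 = y := by abel
      rw [this]
      exact lt_of_lt_of_le hynorm (min_le_right _ _)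
    have hmem0 : z0 ∈ t := by
      apply hball₁; simpa using hε₁
    have hnum : |φ q| ≤ (L : ℝ) * ‖y‖ := by
      rw [hφq]
      have := hlip.dist_le_mul (z0 + y) hmem z0 hmem0
      rw [Real.dist_eq, dist_eq_norm] at this
      have e1 : z0 + y - z0 = y := by abel
      rw [e1] at this
      calc |φ (z0 + y)| = |φ (z0 + y) - φ z0| := by rw [hφ0]; ring_nf
        _ ≤ (L : ℝ) * ‖y‖ := this
    have habs : |f q| = |φ q| / (M - w p q) := by
      rw [hf]
      simp only [abs_div, abs_of_pos hdenpos]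
    rw [habs]
    have h2 : |φ q| / (M - w p q) ≤ ((L:ℝ) * ‖y‖) / (c * ‖y‖^2) :=
      div_le_div₀ (by positivity) hnum (by positivity) hden
    refine h2.trans (le_of_eq ?_)
    rw [hCB]
    field_simp
  -- measurability
  have hfm : Measurable f := (hφc.measurable).div ((continuous_const.sub hwc).measurable)
  have hfaesm : AEStronglyMeasurable f (volume.restrict box) := hfm.aestronglyMeasurable
  rw [memLp_two_iff_integrable_sq hfaesm]
  -- the compact fundamental domain
  set Kc : Set 𝕋 := Set.univ.pi fun _ => Set.Icc (-Real.pi) Real.pi with hKcdef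
  have hKc : IsCompact Kc := isCompact_univ_pi fun _ => isCompact_Icc
  have hboxKc : box ⊆ Kc := by
    intro q hq
    intro i _
    exact ⟨(hq i trivial).1.le, (hq i trivial).2⟩
  -- the open cover
  set U : 𝕋 → Set 𝕋 := fun z => if w p z = M then Metric.ball z r₀ else {q | w p q < M}
    with hU
  have hUopen : ∀ z, IsOpen (U z) := by
    intro z
    simp only [hU]
    split
    · exact Metric.isOpen_ball
    · exact isOpen_lt hwc continuous_const
  have hcover : Kc ⊆ ⋃ z, U z := by
    intro q _
    apply Set.mem_iUnion.2 ⟨q, ?_⟩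
    rw [hU]
    by_cases h : w p q = M
    · simp only [if_pos h]
      exact Metric.mem_ball_self hr₀pos
    · simp only [if_neg h]
      exact lt_of_le_of_ne (hq0max p hp q) h
  obtain ⟨T, hT⟩ := hKc.elim_finite_subcover U hUopen hcover
  set B : Set 𝕋 := ⋃ z ∈ T, (if w p z = M then Metric.ball z r₀ else ∅) with hB
  have hBopen : IsOpen B := by
    apply isOpen_biUnion
    intro z _
    split
    · exact Metric.isOpen_ball
    · exact isOpen_empty
  set A : Set 𝕋 := Kc \ B with hA
  have hAcompact : IsCompact A := hKc.diff hBopen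
  have hApos : ∀ q ∈ A, w p q < M := by
    rintro q ⟨hqK, hqB⟩
    obtain ⟨z, hzT, hzU⟩ := Set.mem_iUnion₂.1 (hT hqK)
    rw [hU] at hzU
    by_cases h : w p z = M
    · exfalso
      apply hqB
      rw [hB]
      apply Set.mem_biUnion hzT
      rw [if_pos h]
      simpa [if_pos h] using hzU
    · simpa [if_neg h] using hzU
  -- integrability of f² on A
  have hIA : IntegrableOn (fun q => f q ^ 2) A volume := by
    apply ContinuousOn.integrableOn_compact hAcompact
    apply ContinuousOn.pow
    apply ContinuousOn.div hφc.continuousOn (continuous_const.sub hwc).continuousOn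
    intro q hq
    exact ne_of_gt (sub_pos.2 (hApos q hq))
  -- integrability of f² on box ∩ ball z r₀ for singular z
  have hIball : ∀ z : 𝕋, w p z = M →
      IntegrableOn (fun q => f q ^ 2) (box ∩ Metric.ball z r₀) volume := by
    intro z hz
    set R : ℝ := Real.pi + ‖z‖ + 1 with hR
    have hRpos : 0 < R := by positivity
    choose h hInt hnn hbound using fun i : Fin 3 => aux_oneD (z i) R hRpos
    set GG : 𝕋 → ℝ := fun q => CB^2 * ∏ i, h i (q i) with hGG
    have hGGint : Integrable GG volume := by
      apply Integrable.const_mul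
      exact Integrable.fintype_prod (f := fun i t => h i t) hInt
    have hsmeas : MeasurableSet (box ∩ Metric.ball z r₀) :=
      (MeasurableSet.univ_pi fun _ => measurableSet_Ioc).inter measurableSet_ball
    apply Integrable.mono' (hGGint.restrict (s := box ∩ Metric.ball z r₀))
    · exact (hfm.pow_const 2).aestronglyMeasurable
    · -- a.e. bound
      have hNzero : volume {q : 𝕋 | ∃ i, q i = z i} = 0 := by
        have : {q : 𝕋 | ∃ i, q i = z i} = ⋃ i, {q : 𝕋 | q i = z i} := by
          ext q; simp
        rw [this]
        apply measure_iUnion_null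
        intro i
        rw [volume_pi]
        exact MeasureTheory.Measure.pi_hyperplane (fun _ : Fin 3 => (volume : Measure ℝ)) i (z i)
      have hae : ∀ᵐ q ∂(volume.restrict (box ∩ Metric.ball z r₀)),
          ¬ (∃ i, q i = z i) := ae_restrict_of_ae (measure_eq_zero_iff_ae_notMem.1 hNzero)
      filter_upwards [hae, ae_restrict_mem hsmeas] with q hqN hqmem
      obtain ⟨hqbox, hqball⟩ := hqmem
      have hqi : ∀ i, q i ≠ z i := fun i hi => hqN ⟨i, hi⟩
      have hqz : q ≠ z := fun h => hqi 0 (by rw [h])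
      set y : 𝕋 := q - z with hy
      have hyi : ∀ i, y i ≠ 0 := fun i => sub_ne_zero.2 (hqi i)
      have hypos : (0:ℝ) < ‖y‖ := norm_pos_iff.2 (fun h => hqz (by
        have := sub_eq_zero.1 (by rw [← hy]; exact h); exact this))
      have hstep1 : |f q| ≤ CB * ‖y‖⁻¹ := hkey z hz q (Metric.mem_ball.1 hqball) hqz
      have hstep2 : (‖y‖^2)⁻¹ ≤ ∏ i, |y i| ^ (-(2/3) : ℝ) := by
        have hprod : ∏ i, |y i| ^ ((2/3):ℝ) ≤ ‖y‖^2 := by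
          calc ∏ i, |y i| ^ ((2/3):ℝ) ≤ ∏ i : Fin 3, ‖y‖ ^ ((2/3):ℝ) := by
                apply Finset.prod_le_prod
                · intro i _; positivity
                · intro i _
                  apply Real.rpow_le_rpow (abs_nonneg _) _ (by norm_num)
                  rw [← Real.norm_eq_abs]
                  exact norm_le_pi_norm y i
            _ = (‖y‖ ^ ((2/3):ℝ))^(3:ℕ) := by
                rw [Finset.prod_const]
                norm_num
            _ = ‖y‖ ^ ((2:ℝ)) := by
                rw [← Real.rpow_natCast (‖y‖ ^ ((2/3):ℝ)) 3, ← Real.rpow_mul (norm_nonneg _)]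
                norm_num
            _ = ‖y‖^2 := by
                rw [← Real.rpow_natCast ‖y‖ 2]
                norm_num
        have hppos : (0:ℝ) < ∏ i, |y i| ^ ((2/3):ℝ) := by
          apply Finset.prod_pos
          intro i _
          exact Real.rpow_pos_of_pos (abs_pos.2 (hyi i)) _
        have h1 : (‖y‖^2)⁻¹ ≤ (∏ i, |y i| ^ ((2/3):ℝ))⁻¹ :=
          inv_anti₀ hppos hprod
        refine h1.trans (le_of_eq ?_)
        rw [← Finset.prod_inv_distrib]
        apply Finset.prod_congr rfl
        intro i _
        rw [← Real.rpow_neg (abs_nonneg _)]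
      have hstep3 : ∏ i, |y i| ^ (-(2/3) : ℝ) ≤ ∏ i, h i (q i) := by
        apply Finset.prod_le_prod
        · intro i _; positivity
        · intro i _
          have hyiq : y i = q i - z i := rfl
          have hle : |q i - z i| ≤ R := by
            have h1 : |q i| ≤ Real.pi := by
              have := hqbox i trivial
              rw [abs_le]
              exact ⟨(this.1).le, this.2⟩
            have h2 : |z i| ≤ ‖z‖ := by
              rw [← Real.norm_eq_abs]; exact norm_le_pi_norm z i
            calc |q i - z i| ≤ |q i| + |z i| := abs_sub _ _
              _ ≤ Real.pi + ‖z‖ := add_le_add h1 h2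
              _ ≤ R := by rw [hR]; linarith
          have := hbound i (q i) (hqi i) hle
          rwa [← hyiq] at this
      -- combine
      have hnorm : ‖f q ^ 2‖ = f q ^ 2 := by
        rw [Real.norm_eq_abs, abs_of_nonneg (sq_nonneg _)]
      rw [hnorm, hGG]
      calc f q ^ 2 = |f q| ^ 2 := (sq_abs _).symm
        _ ≤ (CB * ‖y‖⁻¹)^2 := by
            apply pow_le_pow_left₀ (abs_nonneg _) hstep1
        _ = CB^2 * (‖y‖^2)⁻¹ := by
            rw [mul_pow, ← inv_pow]
        _ ≤ CB^2 * ∏ i, |y i| ^ (-(2/3) : ℝ) := by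
            apply mul_le_mul_of_nonneg_left hstep2 (by positivity)
        _ ≤ CB^2 * ∏ i, h i (q i) := by
            apply mul_le_mul_of_nonneg_left hstep3 (by positivity)
  -- assemble
  have hcover2 : box ⊆ (box ∩ A) ∪ ⋃ z ∈ T, (box ∩ (if w p z = M then Metric.ball z r₀ else ∅)) := by
    intro q hq
    by_cases hqB : q ∈ B
    · right
      rw [hB] at hqB
      obtain ⟨z, hzT, hzmem⟩ := Set.mem_iUnion₂.1 hqB
      exact Set.mem_iUnion₂.2 ⟨z, hzT, ⟨hq, hzmem⟩⟩
    · left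
      exact ⟨hq, ⟨hboxKc hq, hqB⟩⟩
  apply IntegrableOn.mono_set _ hcover2
  apply IntegrableOn.union
  · exact hIA.mono_set Set.inter_subset_right
  · rw [integrableOn_finset_iUnion]
    intro z hzT
    by_cases h : w p z = M
    · rw [if_pos h]
      exact hIball z h
    · rw [if_neg h]
      simp
end
end
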